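/- Let α ∈ (0,1), k ≥ 1, and q₁, q₂ ≥ 0 with q = q₁ + q₂. Then the best uniform rational approximation errors satisfy both (1+q₁)² · E_{q₁,α,k} ≤ (1+q)² · E_{q,α,k} and E_{q,α,k} · (1 + q₂ · E_{q₁,α,k}) ≤ E_{q₁,α,k}; equivalently, (1+q₁)²/(1+q)² ≤ E_{q,α,k}/E_{q₁,α,k} ≤ 1/(1 + q₂ E_{q₁,α,k}) whenever E_{q₁,α,k} > 0. -/

import Mathlib

open Real Set

/-- The best uniform rational approximation (BURA) error `E_{q,α,k}` of
`g_q(z;α) = z^α/(1 + q z^α)` on `[0,1]` by rational functions `P/Q` with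
`deg P, deg Q ≤ k` and `Q` nonvanishing on `[0,1]`. -/
noncomputable def buraError (q α : ℝ) (k : ℕ) : ℝ :=
  sInf { e : ℝ | ∃ P Q : Polynomial ℝ, P.natDegree ≤ k ∧ Q.natDegree ≤ k ∧
    (∀ z ∈ Set.Icc (0:ℝ) 1, Q.eval z ≠ 0) ∧
    e = ⨆ z : Set.Icc (0:ℝ) 1,
      |P.eval (z : ℝ) / Q.eval (z : ℝ) - (z : ℝ) ^ α / (1 + q * (z : ℝ) ^ α)| }

open Polynomial

lemma continuous_rpow_const {α : ℝ} (hα : 0 < α) : Continuous fun x : ℝ => x ^ α := by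
  rw [continuous_iff_continuousAt]
  exact fun x => Real.continuousAt_rpow_const x α (Or.inr hα.le)

lemma bddAbove_err {α q : ℝ} (hα : 0 < α) (hq : 0 ≤ q) (P Q : Polynomial ℝ)
    (hQ : ∀ z ∈ Set.Icc (0:ℝ) 1, Q.eval z ≠ 0) :
    BddAbove (Set.range fun z : Set.Icc (0:ℝ) 1 =>
      |P.eval (z : ℝ) / Q.eval (z : ℝ) - (z : ℝ) ^ α / (1 + q * (z : ℝ) ^ α)|) := by
  have hcont : ContinuousOn
      (fun z : ℝ => |P.eval z / Q.eval z - z ^ α / (1 + q * z ^ α)|) (Set.Icc 0 1) := by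
    apply ContinuousOn.abs
    apply ContinuousOn.sub
    · exact ContinuousOn.div P.continuous.continuousOn Q.continuous.continuousOn hQ
    · apply ContinuousOn.div (continuous_rpow_const hα).continuousOn
        (continuous_const.add (continuous_const.mul (continuous_rpow_const hα))).continuousOn
      intro z hz
      have h0 : 0 ≤ z ^ α := Real.rpow_nonneg hz.1 α
      show (1:ℝ) + q * z ^ α ≠ 0
      nlinarith [mul_nonneg hq h0]
  have h := IsCompact.bddAbove_image isCompact_Icc hcont
  rwa [Set.image_eq_range] at h

lemma le_err_sup {α q : ℝ} (hα : 0 < α) (hq : 0 ≤ q) (P Q : Polynomial ℝ)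
    (hQ : ∀ z ∈ Set.Icc (0:ℝ) 1, Q.eval z ≠ 0) {z : ℝ} (hz : z ∈ Set.Icc (0:ℝ) 1) :
    |P.eval z / Q.eval z - z ^ α / (1 + q * z ^ α)| ≤
      ⨆ w : Set.Icc (0:ℝ) 1,
        |P.eval (w : ℝ) / Q.eval (w : ℝ) - (w : ℝ) ^ α / (1 + q * (w : ℝ) ^ α)| :=
  le_ciSup (bddAbove_err hα hq P Q hQ) (⟨z, hz⟩ : Set.Icc (0:ℝ) 1)

lemma arith2 (q₂ e a b : ℝ) (hq : 0 ≤ q₂) (he : 0 ≤ e) (hb : 0 ≤ b) (hab : |a - b| ≤ e) :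
    |(a + e) / (1 + q₂ * (a + e)) - e / (1 + 2 * q₂ * e) - b / (1 + q₂ * b)| ≤
      e / (1 + 2 * q₂ * e) := by
  rw [abs_le] at hab
  set s := a + e with hs
  have hsb : b ≤ s := by simp only [hs]; linarith [hab.1]
  have hu2 : s - b ≤ 2 * e := by simp only [hs]; linarith [hab.2]
  have hB : (0:ℝ) < 1 + q₂ * b := by nlinarith
  have hS : (0:ℝ) < 1 + q₂ * s := by nlinarith
  have hD : (0:ℝ) < 1 + 2 * q₂ * e := by nlinarith
  have key : s / (1 + q₂ * s) - b / (1 + q₂ * b) = (s - b) / ((1 + q₂ * s) * (1 + q₂ * b)) := by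
    rw [div_sub_div _ _ hS.ne' hB.ne']
    ring
  rw [sub_right_comm, key, abs_le]
  have hpos : 0 ≤ (s - b) / ((1 + q₂ * s) * (1 + q₂ * b)) :=
    div_nonneg (by linarith) (by positivity)
  constructor
  · have := div_nonneg he hD.le
    linarith
  · have h2 : (s - b) / ((1 + q₂ * s) * (1 + q₂ * b)) ≤ 2 * e / (1 + 2 * q₂ * e) := by
      rw [div_le_div_iff₀ (by positivity) hD]
      nlinarith [mul_nonneg hq (sub_nonneg.2 hsb), mul_nonneg hq hb,
        mul_nonneg (mul_nonneg hq hq) (mul_nonneg hb (sub_nonneg.2 hsb)),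
        mul_nonneg he (mul_nonneg hq hb),
        mul_nonneg (mul_nonneg he (mul_nonneg hq hq)) (mul_nonneg hb (sub_nonneg.2 hsb))]
    have h3 : 2 * e / (1 + 2 * q₂ * e) = 2 * (e / (1 + 2 * q₂ * e)) := by ring
    linarith [h3 ▸ h2]

lemma arith1 (q₂ e a c m : ℝ) (hq : 0 ≤ q₂) (he : 0 ≤ e) (hc : 0 ≤ c) (hm : 0 < m)
    (hmc : m ≤ 1 - q₂ * c) (hab : |a - c| ≤ e) :
    |(a - e) / (1 - q₂ * (a - e)) + e / (m * m) - c / (1 - q₂ * c)| ≤ e / (m * m) := by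
  rw [abs_le] at hab
  set s := a - e with hs
  have hsc : s ≤ c := by simp only [hs]; linarith [hab.2]
  have hu2 : c - s ≤ 2 * e := by simp only [hs]; linarith [hab.1]
  have hC : (0:ℝ) < 1 - q₂ * c := lt_of_lt_of_le hm hmc
  have hSm : m ≤ 1 - q₂ * s := by nlinarith [mul_nonneg hq (sub_nonneg.2 hsc)]
  have hS : (0:ℝ) < 1 - q₂ * s := lt_of_lt_of_le hm hSm
  have key : c / (1 - q₂ * c) - s / (1 - q₂ * s) = (c - s) / ((1 - q₂ * c) * (1 - q₂ * s)) := by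
    rw [div_sub_div _ _ hC.ne' hS.ne']
    ring
  have hpos : 0 ≤ (c - s) / ((1 - q₂ * c) * (1 - q₂ * s)) :=
    div_nonneg (by linarith) (by positivity)
  have h2 : (c - s) / ((1 - q₂ * c) * (1 - q₂ * s)) ≤ 2 * e / (m * m) := by
    rw [div_le_div_iff₀ (by positivity) (by positivity)]
    nlinarith [mul_le_mul hmc hSm hm.le hC.le, sq_nonneg m]
  have hrw : s / (1 - q₂ * s) + e / (m * m) - c / (1 - q₂ * c)
      = e / (m * m) - (c - s) / ((1 - q₂ * c) * (1 - q₂ * s)) := by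
    rw [← key]; ring
  rw [hrw, abs_le]
  have h3 : 2 * e / (m * m) = 2 * (e / (m * m)) := by ring
  constructor
  · linarith [h3 ▸ h2]
  · have := div_nonneg he (by positivity : (0:ℝ) ≤ m * m)
    linarith

noncomputable def errSet (q α : ℝ) (k : ℕ) : Set ℝ :=
  { e : ℝ | ∃ P Q : Polynomial ℝ, P.natDegree ≤ k ∧ Q.natDegree ≤ k ∧
    (∀ z ∈ Set.Icc (0:ℝ) 1, Q.eval z ≠ 0) ∧
    e = ⨆ z : Set.Icc (0:ℝ) 1,
      |P.eval (z : ℝ) / Q.eval (z : ℝ) - (z : ℝ) ^ α / (1 + q * (z : ℝ) ^ α)| }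

lemma buraError_eq (q α : ℝ) (k : ℕ) : buraError q α k = sInf (errSet q α k) := rfl

lemma mem_errSet {q α : ℝ} {k : ℕ} (P Q : Polynomial ℝ) (hP : P.natDegree ≤ k)
    (hQ : Q.natDegree ≤ k) (hQ0 : ∀ z ∈ Set.Icc (0:ℝ) 1, Q.eval z ≠ 0) :
    (⨆ z : Set.Icc (0:ℝ) 1,
      |P.eval (z : ℝ) / Q.eval (z : ℝ) - (z : ℝ) ^ α / (1 + q * (z : ℝ) ^ α)|) ∈
      errSet q α k :=
  ⟨P, Q, hP, hQ, hQ0, rfl⟩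

lemma errSet_nonempty (q α : ℝ) (k : ℕ) : (errSet q α k).Nonempty :=
  ⟨_, mem_errSet 0 1 (by simp) (by simp) (fun z _ => by simp)⟩

lemma errSet_nonneg {q α : ℝ} {k : ℕ} {e : ℝ} (he : e ∈ errSet q α k) : 0 ≤ e := by
  obtain ⟨P, Q, -, -, -, rfl⟩ := he
  exact Real.iSup_nonneg fun z => abs_nonneg _

lemma bddBelow_errSet (q α : ℝ) (k : ℕ) : BddBelow (errSet q α k) :=
  ⟨0, fun e he => errSet_nonneg he⟩

lemma buraError_nonneg (q α : ℝ) (k : ℕ) : 0 ≤ buraError q α k := by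
  rw [buraError_eq]
  exact le_csInf (errSet_nonempty q α k) fun e he => errSet_nonneg he

lemma deg_comb {k : ℕ} {P Q : Polynomial ℝ} (hP : P.natDegree ≤ k) (hQ : Q.natDegree ≤ k)
    (c d : ℝ) : (Polynomial.C c * P + Polynomial.C d * Q).natDegree ≤ k :=
  le_trans (Polynomial.natDegree_add_le _ _)
    (max_le (le_trans (Polynomial.natDegree_C_mul_le _ _) hP)
      (le_trans (Polynomial.natDegree_C_mul_le _ _) hQ))

instance : Nonempty (Set.Icc (0:ℝ) 1) := ⟨⟨0, Set.left_mem_Icc.mpr zero_le_one⟩⟩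

lemma step2 {α q₁ q₂ : ℝ} {k : ℕ} (hα0 : 0 < α) (hq₁ : 0 ≤ q₁) (hq₂ : 0 ≤ q₂)
    {e : ℝ} (he : e ∈ errSet q₁ α k) :
    buraError (q₁ + q₂) α k ≤ e / (1 + 2 * q₂ * e) := by
  have he0 : 0 ≤ e := errSet_nonneg he
  obtain ⟨P, Q, hP, hQ, hQ0, hedef⟩ := he
  have hD : (0:ℝ) < 1 + 2 * q₂ * e := by nlinarith
  set d : ℝ := e / (1 + 2 * q₂ * e) with hd
  set Q' : Polynomial ℝ := Polynomial.C q₂ * P + Polynomial.C (1 + q₂ * e) * Q with hQ'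
  set P' : Polynomial ℝ :=
    Polynomial.C (1 - d * q₂) * P + Polynomial.C (e - d * (1 + q₂ * e)) * Q with hP'
  -- pointwise analysis
  have hpt : ∀ z ∈ Set.Icc (0:ℝ) 1,
      Q'.eval z ≠ 0 ∧
      |P'.eval z / Q'.eval z - z ^ α / (1 + (q₁ + q₂) * z ^ α)| ≤ d := by
    intro z hz
    have ht0 : 0 ≤ z ^ α := Real.rpow_nonneg hz.1 α
    have hden1 : (0:ℝ) < 1 + q₁ * z ^ α := by nlinarith [mul_nonneg hq₁ ht0]
    set b : ℝ := z ^ α / (1 + q₁ * z ^ α) with hb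
    have hb0 : 0 ≤ b := div_nonneg ht0 hden1.le
    have hw : Q.eval z ≠ 0 := hQ0 z hz
    set a : ℝ := P.eval z / Q.eval z with ha
    have habs : |a - b| ≤ e := by
      rw [hedef]
      exact le_err_sup hα0 hq₁ P Q hQ0 hz
    have hae : 0 ≤ a + e := by
      rw [abs_le] at habs
      linarith [habs.1]
    have hposS : (0:ℝ) < 1 + q₂ * (a + e) := by nlinarith [mul_nonneg hq₂ hae]
    have hQ'z : Q'.eval z = Q.eval z * (1 + q₂ * (a + e)) := by
      simp only [hQ', eval_add, eval_mul, eval_C, ha]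
      field_simp
      ring
    have hQ'ne : Q'.eval z ≠ 0 := by
      rw [hQ'z]; exact mul_ne_zero hw hposS.ne'
    refine ⟨hQ'ne, ?_⟩
    have hPQ' : P'.eval z / Q'.eval z = (a + e) / (1 + q₂ * (a + e)) - d := by
      rw [eq_sub_iff_add_eq, div_add' _ _ _ hQ'ne, div_eq_div_iff hQ'ne hposS.ne']
      simp only [hP', hQ', eval_add, eval_mul, eval_C, ha]
      field_simp
      ring
    have hgq : z ^ α / (1 + (q₁ + q₂) * z ^ α) = b / (1 + q₂ * b) := by
      have hden2 : (0:ℝ) < 1 + (q₁ + q₂) * z ^ α := by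
        nlinarith [mul_nonneg (add_nonneg hq₁ hq₂) ht0]
      have hQb : (0:ℝ) < 1 + q₂ * b := by positivity
      rw [div_eq_div_iff hden2.ne' hQb.ne', hb]
      field_simp
      ring
    rw [hPQ', hgq]
    exact arith2 q₂ e a b hq₂ he0 hb0 habs
  have hmem := mem_errSet (q := q₁ + q₂) (α := α) P' Q'
    (deg_comb hP hQ _ _) (deg_comb hP hQ _ _) (fun z hz => (hpt z hz).1)
  rw [buraError_eq]
  refine le_trans (csInf_le (bddBelow_errSet _ _ _) hmem) ?_
  exact ciSup_le fun z => (hpt z z.2).2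

lemma step1 {α q₁ q₂ : ℝ} {k : ℕ} (hα0 : 0 < α) (hq₁ : 0 ≤ q₁) (hq₂ : 0 ≤ q₂)
    {e : ℝ} (he : e ∈ errSet (q₁ + q₂) α k) :
    buraError q₁ α k ≤
      e / (((1 + q₁) / (1 + (q₁ + q₂))) * ((1 + q₁) / (1 + (q₁ + q₂)))) := by
  have he0 : 0 ≤ e := errSet_nonneg he
  have hqp : (0:ℝ) < 1 + (q₁ + q₂) := by linarith
  have hq1p : (0:ℝ) < 1 + q₁ := by linarith
  set m : ℝ := (1 + q₁) / (1 + (q₁ + q₂)) with hm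
  have hm0 : 0 < m := by positivity
  obtain ⟨P, Q, hP, hQ, hQ0, hedef⟩ := he
  set L : ℝ := e / (m * m) with hL
  set Q' : Polynomial ℝ := Polynomial.C (-q₂) * P + Polynomial.C (1 + q₂ * e) * Q with hQ'
  set P' : Polynomial ℝ :=
    Polynomial.C (1 - L * q₂) * P + Polynomial.C (-e + L * (1 + q₂ * e)) * Q with hP'
  have hpt : ∀ z ∈ Set.Icc (0:ℝ) 1,
      Q'.eval z ≠ 0 ∧
      |P'.eval z / Q'.eval z - z ^ α / (1 + q₁ * z ^ α)| ≤ L := by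
    intro z hz
    have ht0 : 0 ≤ z ^ α := Real.rpow_nonneg hz.1 α
    have ht1 : z ^ α ≤ 1 := Real.rpow_le_one hz.1 hz.2 hα0.le
    have hden2 : (0:ℝ) < 1 + (q₁ + q₂) * z ^ α := by
      nlinarith [mul_nonneg (add_nonneg hq₁ hq₂) ht0]
    have hden1 : (0:ℝ) < 1 + q₁ * z ^ α := by nlinarith [mul_nonneg hq₁ ht0]
    set c : ℝ := z ^ α / (1 + (q₁ + q₂) * z ^ α) with hc
    have hc0 : 0 ≤ c := div_nonneg ht0 hden2.le
    have hmc : m ≤ 1 - q₂ * c := by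
      have hcc : 1 - q₂ * c = (1 + q₁ * z ^ α) / (1 + (q₁ + q₂) * z ^ α) := by
        rw [hc]; field_simp; ring
      rw [hcc, hm, div_le_div_iff₀ hqp hden2]
      nlinarith [mul_nonneg hq₂ (sub_nonneg.2 ht1)]
    have hw : Q.eval z ≠ 0 := hQ0 z hz
    set a : ℝ := P.eval z / Q.eval z with ha
    have habs : |a - c| ≤ e := by
      rw [hedef]
      exact le_err_sup hα0 (add_nonneg hq₁ hq₂) P Q hQ0 hz
    have hsc : a - e ≤ c := by
      rw [abs_le] at habs; linarith [habs.2]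
    have hposS : (0:ℝ) < 1 - q₂ * (a - e) := by
      nlinarith [mul_nonneg hq₂ (sub_nonneg.2 hsc)]
    have hQ'z : Q'.eval z = Q.eval z * (1 - q₂ * (a - e)) := by
      simp only [hQ', eval_add, eval_mul, eval_C, ha]
      field_simp
      ring
    have hQ'ne : Q'.eval z ≠ 0 := by
      rw [hQ'z]; exact mul_ne_zero hw hposS.ne'
    refine ⟨hQ'ne, ?_⟩
    have hPQ' : P'.eval z / Q'.eval z = (a - e) / (1 - q₂ * (a - e)) + L := by
      rw [div_add' _ _ _ hposS.ne', div_eq_div_iff hQ'ne hposS.ne']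
      simp only [hP', hQ', eval_add, eval_mul, eval_C, ha]
      field_simp
      ring
    have hgq1 : z ^ α / (1 + q₁ * z ^ α) = c / (1 - q₂ * c) := by
      have hCpos : (0:ℝ) < 1 - q₂ * c := lt_of_lt_of_le hm0 hmc
      rw [div_eq_div_iff hden1.ne' hCpos.ne', hc]
      field_simp
      ring
    rw [hPQ', hgq1]
    simp only [hL]
    exact arith1 q₂ e a c m hq₂ he0 hc0 hm0 hmc habs
  have hmem := mem_errSet (q := q₁) (α := α) P' Q'
    (deg_comb hP hQ _ _) (deg_comb hP hQ _ _) (fun z hz => (hpt z hz).1)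
  rw [buraError_eq]
  refine le_trans (csInf_le (bddBelow_errSet _ _ _) hmem) ?_
  exact ciSup_le fun z => (hpt z z.2).2

/-- Two-sided estimates relating `E_{q,α,k}` and `E_{q₁,α,k}` for `q = q₁ + q₂`:
`(1+q₁)² E_{q₁,α,k} ≤ (1+q)² E_{q,α,k}` and `E_{q,α,k}(1 + q₂ E_{q₁,α,k}) ≤ E_{q₁,α,k}`. -/
theorem buraError_two_sided_bounds (α : ℝ) (hα : α ∈ Set.Ioo (0:ℝ) 1) (k : ℕ) (hk : 1 ≤ k)
    (q₁ q₂ : ℝ) (hq₁ : 0 ≤ q₁) (hq₂ : 0 ≤ q₂) :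
    (1 + q₁) ^ 2 * buraError q₁ α k ≤ (1 + (q₁ + q₂)) ^ 2 * buraError (q₁ + q₂) α k ∧
    buraError (q₁ + q₂) α k * (1 + q₂ * buraError q₁ α k) ≤ buraError q₁ α k := by
  obtain ⟨hα0, hα1⟩ := hα
  have hqp : (0:ℝ) < 1 + (q₁ + q₂) := by linarith
  have hq1p : (0:ℝ) < 1 + q₁ := by linarith
  have hE₁0 : 0 ≤ buraError q₁ α k := buraError_nonneg _ _ _
  have hEq0 : 0 ≤ buraError (q₁ + q₂) α k := buraError_nonneg _ _ _
  constructor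
  · set m : ℝ := (1 + q₁) / (1 + (q₁ + q₂)) with hm
    have hm0 : 0 < m := by positivity
    have h1 : ∀ e ∈ errSet (q₁ + q₂) α k, buraError q₁ α k * (m * m) ≤ e := by
      intro e he
      have hle := step1 hα0 hq₁ hq₂ he
      rw [← hm] at hle
      calc buraError q₁ α k * (m * m) ≤ (e / (m * m)) * (m * m) :=
            mul_le_mul_of_nonneg_right hle (by positivity)
        _ = e := by field_simp
    have h2 : buraError q₁ α k * (m * m) ≤ buraError (q₁ + q₂) α k := by
      rw [buraError_eq (q₁ + q₂) α k]
      exact le_csInf (errSet_nonempty _ _ _) h1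
    have hmq : m * (1 + (q₁ + q₂)) = 1 + q₁ := by rw [hm]; field_simp
    have key : (1 + q₁) ^ 2 * buraError q₁ α k =
        (1 + (q₁ + q₂)) ^ 2 * (buraError q₁ α k * (m * m)) := by
      rw [← hmq]; ring
    rw [key]
    exact mul_le_mul_of_nonneg_left h2 (by positivity)
  · have h1 : ∀ e ∈ errSet q₁ α k,
        buraError (q₁ + q₂) α k * (1 + q₂ * buraError q₁ α k) ≤ e := by
      intro e he
      have he0 := errSet_nonneg he
      have hD : (0:ℝ) < 1 + 2 * q₂ * e := by nlinarith
      have hEqd := step2 hα0 hq₁ hq₂ he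
      have hE₁e : buraError q₁ α k ≤ e := by
        rw [buraError_eq q₁ α k]
        exact csInf_le (bddBelow_errSet _ _ _) he
      have hEq2 : buraError (q₁ + q₂) α k * (1 + 2 * q₂ * e) ≤ e := (le_div_iff₀ hD).mp hEqd
      nlinarith [mul_nonneg (mul_nonneg hq₂ hEq0) (sub_nonneg.2 hE₁e),
        mul_nonneg (mul_nonneg hq₂ hEq0) he0]
    rw [buraError_eq q₁ α k]
    exact le_csInf (errSet_nonempty _ _ _) h1
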